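/- Let ν ≥ 0 and γ > 0. Then there exists a constant C > 0 such that for all x > 0 one has 0 < K_ν(x) ≤ C (1 + x^{-(ν+γ)}) e^{-x}. -/

import Mathlib

open Real Set MeasureTheory

/-- The modified Bessel function of the second kind,
`K_ν(x) = ∫₀^∞ exp(−x cosh t) cosh(ν t) dt`. -/
noncomputable def besselK (ν x : ℝ) : ℝ :=
  ∫ t in Set.Ioi (0:ℝ), Real.exp (-x * Real.cosh t) * Real.cosh (ν * t)

namespace BesselKAux

/-- The integrand after the change of variables `u = exp t`. -/
noncomputable def F (ν x u : ℝ) : ℝ :=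
  Real.exp (-x * ((u + u⁻¹) / 2)) * ((u ^ ν + u ^ (-ν)) / (2 * u))

lemma image_exp : Real.exp '' Set.Ioi (0:ℝ) = Set.Ioi 1 := by
  ext u
  constructor
  · rintro ⟨t, ht, rfl⟩
    simpa using Real.exp_lt_exp.mpr ht
  · intro hu
    exact ⟨Real.log u, Real.log_pos hu, Real.exp_log (lt_trans one_pos hu)⟩

lemma key_eq (ν x t : ℝ) :
    |Real.exp t| • F ν x (Real.exp t)
      = Real.exp (-x * Real.cosh t) * Real.cosh (ν * t) := by
  have h1 : Real.exp t ^ ν = Real.exp (ν * t) := by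
    rw [← Real.exp_mul, mul_comm]
  have h2 : Real.exp t ^ (-ν) = Real.exp (-(ν * t)) := by
    rw [← Real.exp_mul, mul_comm, neg_mul]
  have h3 : -x * ((Real.exp t + (Real.exp t)⁻¹) / 2) = -x * Real.cosh t := by
    rw [Real.cosh_eq, Real.exp_neg]
  rw [smul_eq_mul, Real.abs_exp, F, h1, h2, h3, Real.cosh_eq (ν * t)]
  have he := Real.exp_ne_zero t
  field_simp

end BesselKAux

open BesselKAux

/-- Main theorem. -/
theorem stmt_0 (ν γ : ℝ) (hν : 0 ≤ ν) (hγ : 0 < γ) :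
    ∃ C : ℝ, 0 < C ∧ ∀ x : ℝ, 0 < x →
      0 < besselK ν x ∧ besselK ν x ≤ C * (1 + x ^ (-(ν + γ))) * Real.exp (-x) := by
  have hνγ : 0 < ν + γ := by linarith
  have hΓ : 0 < Real.Gamma (ν + γ) := Real.Gamma_pos_of_pos hνγ
  refine ⟨2 ^ ν + 8 ^ (ν + γ) * Real.Gamma (ν + γ), ?_, ?_⟩
  · have := Real.rpow_pos_of_pos (by norm_num : (0:ℝ) < 2) ν
    have := Real.rpow_pos_of_pos (by norm_num : (0:ℝ) < 8) (ν + γ)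
    positivity
  intro x hx
  -- derivative hypotheses for the change of variables
  have hderiv : ∀ t ∈ Set.Ioi (0:ℝ),
      HasDerivWithinAt Real.exp (Real.exp t) (Set.Ioi 0) t :=
    fun t _ => (Real.hasDerivAt_exp t).hasDerivWithinAt
  have hinj : Set.InjOn Real.exp (Set.Ioi 0) := Real.exp_injective.injOn
  -- measurability of F
  have hFmeas : Measurable (F ν x) := by
    unfold F
    fun_prop
  -- F is nonnegative for u > 0
  have hFnn : ∀ u : ℝ, 0 < u → 0 ≤ F ν x u := by
    intro u hu
    unfold F
    positivity
  -- pointwise bound on (1, ∞)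
  have hFle : ∀ u : ℝ, 1 < u →
      F ν x u ≤ u ^ (ν + γ - 1) * Real.exp (-(x / 2) * u) := by
    intro u hu
    have hu0 : 0 < u := lt_trans one_pos hu
    have hinv : 0 < u⁻¹ := inv_pos.mpr hu0
    have hexp : Real.exp (-x * ((u + u⁻¹) / 2)) ≤ Real.exp (-(x / 2) * u) := by
      apply Real.exp_le_exp.mpr
      nlinarith
    have hpow : (u ^ ν + u ^ (-ν)) / (2 * u) ≤ u ^ (ν + γ - 1) := by
      have h1 : u ^ (-ν) ≤ u ^ ν :=
        Real.rpow_le_rpow_of_exponent_le hu.le (by linarith)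
      have h2 : (u ^ ν + u ^ (-ν)) / (2 * u) ≤ u ^ ν / u := by
        rw [div_le_div_iff₀ (by positivity) hu0]
        ring_nf
        nlinarith [Real.rpow_pos_of_pos hu0 ν]
      have h3 : u ^ ν / u = u ^ (ν - 1) := by
        rw [Real.rpow_sub hu0, Real.rpow_one]
      have h4 : u ^ (ν - 1) ≤ u ^ (ν + γ - 1) :=
        Real.rpow_le_rpow_of_exponent_le hu.le (by linarith)
      calc (u ^ ν + u ^ (-ν)) / (2 * u) ≤ u ^ ν / u := h2
        _ = u ^ (ν - 1) := h3
        _ ≤ u ^ (ν + γ - 1) := h4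
    calc F ν x u ≤ Real.exp (-(x / 2) * u) * (u ^ (ν + γ - 1)) := by
          unfold F
          apply mul_le_mul hexp hpow (by positivity) (Real.exp_pos _).le
      _ = u ^ (ν + γ - 1) * Real.exp (-(x / 2) * u) := by ring
  -- integrable dominating function
  have hHint : IntegrableOn (fun u : ℝ => u ^ (ν + γ - 1) * Real.exp (-(x / 2) * u))
      (Set.Ioi 0) := by
    have := integrableOn_rpow_mul_exp_neg_mul_rpow (by linarith : (-1:ℝ) < ν + γ - 1)
      zero_lt_one (by positivity : 0 < x / 2)
    simpa [Real.rpow_one] using this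
  -- integrability of F on Ioi 1
  have hFint : IntegrableOn (F ν x) (Set.Ioi 1) := by
    apply Integrable.mono' (hHint.mono_set (Set.Ioi_subset_Ioi zero_le_one))
      (hFmeas.aestronglyMeasurable.restrict)
    filter_upwards [ae_restrict_mem measurableSet_Ioi] with u hu
    rw [Real.norm_eq_abs, abs_of_nonneg (hFnn u (lt_trans one_pos hu))]
    exact hFle u hu
  -- the change of variables
  have hchange : besselK ν x = ∫ u in Set.Ioi (1:ℝ), F ν x u := by
    rw [besselK, ← image_exp,
      integral_image_eq_integral_abs_deriv_smul measurableSet_Ioi hderiv hinj (F ν x)]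
    exact setIntegral_congr_fun measurableSet_Ioi fun t _ => (key_eq ν x t).symm
  -- integrability of the original integrand
  have hfint : IntegrableOn
      (fun t => Real.exp (-x * Real.cosh t) * Real.cosh (ν * t)) (Set.Ioi 0) := by
    have hiff := integrableOn_image_iff_integrableOn_abs_deriv_smul
      measurableSet_Ioi hderiv hinj (F ν x)
    rw [image_exp] at hiff
    have := hiff.mp hFint
    exact this.congr_fun (fun t _ => key_eq ν x t) measurableSet_Ioi
  constructor
  · -- positivity
    have h1 : Real.exp (-x * Real.cosh 1) ≤
        ∫ t in Set.Ioc (0:ℝ) 1, Real.exp (-x * Real.cosh t) * Real.cosh (ν * t) := by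
      have : (∫ t in Set.Ioc (0:ℝ) 1, Real.exp (-x * Real.cosh 1))
          = Real.exp (-x * Real.cosh 1) := by
        simp [Real.volume_Ioc]
      rw [← this]
      apply setIntegral_mono_on
      · exact (integrableOn_const_iff).mpr (Or.inr (by simp [Real.volume_Ioc]))
      · exact hfint.mono_set Set.Ioc_subset_Ioi_self
      · exact measurableSet_Ioc
      · intro t ht
        have hc : Real.cosh t ≤ Real.cosh 1 := by
          rw [Real.cosh_le_cosh]
          rw [abs_of_pos ht.1, abs_one]
          exact ht.2
        have h2 : Real.exp (-x * Real.cosh 1) ≤ Real.exp (-x * Real.cosh t) := by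
          apply Real.exp_le_exp.mpr
          nlinarith
        calc Real.exp (-x * Real.cosh 1) ≤ Real.exp (-x * Real.cosh t) := h2
          _ ≤ Real.exp (-x * Real.cosh t) * Real.cosh (ν * t) :=
            le_mul_of_one_le_right (Real.exp_pos _).le (Real.one_le_cosh _)
    have h2 : (∫ t in Set.Ioc (0:ℝ) 1, Real.exp (-x * Real.cosh t) * Real.cosh (ν * t))
        ≤ besselK ν x := by
      rw [besselK]
      apply setIntegral_mono_set hfint
      · filter_upwards [ae_restrict_mem measurableSet_Ioi] with t _
        positivity
      · exact (Set.Ioc_subset_Ioi_self).eventuallyLE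
    have := Real.exp_pos (-x * Real.cosh 1)
    linarith
  · -- upper bound
    rw [hchange]
    have hsplit : Set.Ioi (1:ℝ) = Set.Ioc 1 2 ∪ Set.Ioi 2 := by
      rw [Set.Ioc_union_Ioi_eq_Ioi]; norm_num
    have hdisj : Disjoint (Set.Ioc (1:ℝ) 2) (Set.Ioi 2) := by
      exact Set.Ioc_disjoint_Ioi le_rfl
    rw [hsplit, setIntegral_union hdisj measurableSet_Ioi
      (hFint.mono_set (by rw [hsplit]; exact Set.subset_union_left))
      (hFint.mono_set (by rw [hsplit]; exact Set.subset_union_right))]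
    -- bound on Ioc 1 2
    have hA : (∫ u in Set.Ioc (1:ℝ) 2, F ν x u) ≤ Real.exp (-x) * 2 ^ ν := by
      have : (∫ u in Set.Ioc (1:ℝ) 2, Real.exp (-x) * 2 ^ ν)
          = Real.exp (-x) * 2 ^ ν := by
        simp [Real.volume_Ioc]
        norm_num
      rw [← this]
      apply setIntegral_mono_on
      · exact hFint.mono_set (by rw [hsplit]; exact Set.subset_union_left)
      · exact (integrableOn_const_iff).mpr (Or.inr (by simp [Real.volume_Ioc]))
      · exact measurableSet_Ioc
      · intro u hu
        have hu1 : 1 < u := hu.1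
        have hu0 : 0 < u := lt_trans one_pos hu1
        have hinv : 0 < u⁻¹ := inv_pos.mpr hu0
        have hexp : Real.exp (-x * ((u + u⁻¹) / 2)) ≤ Real.exp (-x) := by
          apply Real.exp_le_exp.mpr
          have huu : u * u⁻¹ = 1 := mul_inv_cancel₀ (ne_of_gt hu0)
          nlinarith [sq_nonneg (u - 1)]
        have hpow : (u ^ ν + u ^ (-ν)) / (2 * u) ≤ 2 ^ ν := by
          have h1 : u ^ (-ν) ≤ u ^ ν :=
            Real.rpow_le_rpow_of_exponent_le hu1.le (by linarith)
          have h2 : (u ^ ν + u ^ (-ν)) / (2 * u) ≤ u ^ ν := by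
            rw [div_le_iff₀ (by positivity)]
            nlinarith [Real.rpow_pos_of_pos hu0 ν]
          have h3 : u ^ ν ≤ 2 ^ ν := Real.rpow_le_rpow hu0.le hu.2 hν
          linarith
        unfold F
        apply mul_le_mul hexp hpow (by positivity) (Real.exp_pos _).le
    -- bound on Ioi 2
    have hB : (∫ u in Set.Ioi (2:ℝ), F ν x u)
        ≤ Real.exp (-x) * (8 ^ (ν + γ) * Real.Gamma (ν + γ) * x ^ (-(ν + γ))) := by
      have hGint : IntegrableOn
          (fun u : ℝ => u ^ (ν + γ - 1) * Real.exp (-(x / 8 * u))) (Set.Ioi 0) := by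
        have := integrableOn_rpow_mul_exp_neg_mul_rpow
          (by linarith : (-1:ℝ) < ν + γ - 1) zero_lt_one (by positivity : 0 < x / 8)
        simpa [Real.rpow_one, neg_mul] using this
      have step1 : (∫ u in Set.Ioi (2:ℝ), F ν x u)
          ≤ ∫ u in Set.Ioi (2:ℝ),
              Real.exp (-x) * (u ^ (ν + γ - 1) * Real.exp (-(x / 8 * u))) := by
        apply setIntegral_mono_on
        · exact hFint.mono_set (by rw [hsplit]; exact Set.subset_union_right)
        · exact (hGint.mono_set (Set.Ioi_subset_Ioi (by norm_num))).const_mul _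
        · exact measurableSet_Ioi
        · intro u hu
          have hu2 : 2 < u := hu
          have hu0 : 0 < u := by linarith
          have hinv : 0 < u⁻¹ := inv_pos.mpr hu0
          have huu : u * u⁻¹ = 1 := mul_inv_cancel₀ (ne_of_gt hu0)
          have hexp : Real.exp (-x * ((u + u⁻¹) / 2))
              ≤ Real.exp (-x) * Real.exp (-(x / 8 * u)) := by
            rw [← Real.exp_add]
            apply Real.exp_le_exp.mpr
            have key : 3 * u ^ 2 - 8 * u + 4 ≥ 0 := by nlinarith
            have key2 : 3 * u + 4 * u⁻¹ - 8 ≥ 0 := by nlinarith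
            nlinarith
          have hpow : (u ^ ν + u ^ (-ν)) / (2 * u) ≤ u ^ (ν + γ - 1) := by
            have h1 : u ^ (-ν) ≤ u ^ ν :=
              Real.rpow_le_rpow_of_exponent_le (by linarith) (by linarith)
            have h2 : (u ^ ν + u ^ (-ν)) / (2 * u) ≤ u ^ ν / u := by
              rw [div_le_div_iff₀ (by positivity) hu0]
              nlinarith [Real.rpow_pos_of_pos hu0 ν]
            have h3 : u ^ ν / u = u ^ (ν - 1) := by
              rw [Real.rpow_sub hu0, Real.rpow_one]
            have h4 : u ^ (ν - 1) ≤ u ^ (ν + γ - 1) :=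
              Real.rpow_le_rpow_of_exponent_le (by linarith) (by linarith)
            calc (u ^ ν + u ^ (-ν)) / (2 * u) ≤ u ^ ν / u := h2
              _ = u ^ (ν - 1) := h3
              _ ≤ u ^ (ν + γ - 1) := h4
          unfold F
          calc Real.exp (-x * ((u + u⁻¹) / 2)) * ((u ^ ν + u ^ (-ν)) / (2 * u))
              ≤ (Real.exp (-x) * Real.exp (-(x / 8 * u))) * u ^ (ν + γ - 1) := by
                apply mul_le_mul hexp hpow (by positivity) (by positivity)
            _ = Real.exp (-x) * (u ^ (ν + γ - 1) * Real.exp (-(x / 8 * u))) := by ring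
      have step2 : (∫ u in Set.Ioi (2:ℝ),
            Real.exp (-x) * (u ^ (ν + γ - 1) * Real.exp (-(x / 8 * u))))
          ≤ Real.exp (-x) * ∫ u in Set.Ioi (0:ℝ),
              u ^ (ν + γ - 1) * Real.exp (-(x / 8 * u)) := by
        rw [integral_const_mul]
        apply mul_le_mul_of_nonneg_left _ (Real.exp_pos _).le
        apply setIntegral_mono_set hGint
        · filter_upwards [ae_restrict_mem measurableSet_Ioi] with u hu
          have hu0 : (0:ℝ) < u := hu
          positivity
        · exact (Set.Ioi_subset_Ioi (by norm_num)).eventuallyLE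
      have hval : (∫ u in Set.Ioi (0:ℝ), u ^ (ν + γ - 1) * Real.exp (-(x / 8 * u)))
          = 8 ^ (ν + γ) * Real.Gamma (ν + γ) * x ^ (-(ν + γ)) := by
        rw [Real.integral_rpow_mul_exp_neg_mul_Ioi hνγ (by positivity : 0 < x / 8)]
        rw [one_div, Real.rpow_neg hx.le]
        rw [show ((x / 8)⁻¹ : ℝ) = 8 * x⁻¹ by field_simp]
        rw [Real.mul_rpow (by norm_num) (inv_nonneg.mpr hx.le), Real.inv_rpow hx.le]
        ring
      calc (∫ u in Set.Ioi (2:ℝ), F ν x u)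
          ≤ _ := step1
        _ ≤ _ := step2
        _ = Real.exp (-x) * (8 ^ (ν + γ) * Real.Gamma (ν + γ) * x ^ (-(ν + γ))) := by
            rw [hval]
    -- combine
    have hxneg : 0 < x ^ (-(ν + γ)) := Real.rpow_pos_of_pos hx _
    have h2ν : 0 < (2:ℝ) ^ ν := Real.rpow_pos_of_pos (by norm_num) _
    have h8 : 0 < (8:ℝ) ^ (ν + γ) := Real.rpow_pos_of_pos (by norm_num) _
    have hexp0 : 0 < Real.exp (-x) := Real.exp_pos _
    nlinarith [mul_pos hexp0 hxneg, mul_pos (mul_pos h8 hΓ) hexp0,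
      mul_pos h2ν (mul_pos hexp0 hxneg)]
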